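/- Let D ⊆ ℝⁿ be a convex set, P ⊆ ℝⁿ a set, and v ∈ D. Define P to be conical in D with respect to apex v iff for all x ∈ D and all λ ∈ (0,1), x ∈ P ↔ λ(x − v) + v ∈ P. Then the set of points v ∈ D with respect to which P is conical in D is either empty or equal to the intersection of D with an affine subspace of ℝⁿ. -/

import Mathlib

/-- `P` is conical in `D` with respect to apex `v`. -/
def IsConical {n : ℕ} (D P : Set (Fin n → ℝ)) (v : Fin n → ℝ) : Prop :=
  ∀ x ∈ D, ∀ l ∈ Set.Ioo (0 : ℝ) 1, (x ∈ P ↔ v + l • (x - v) ∈ P)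

private lemma conical_key {n : ℕ} {D P : Set (Fin n → ℝ)} (hD : Convex ℝ D)
    (L : List (ℝ × (Fin n → ℝ) × (Fin n → ℝ)))
    (hL : ∀ p ∈ L, (p.2.1 ∈ D ∧ IsConical D P p.2.1) ∧ (p.2.2 ∈ D ∧ IsConical D P p.2.2)) :
    ∀ c : ℝ, ∀ y ∈ D, ∀ z ∈ D,
      z - y = c • (L.map fun p => p.1 • (p.2.1 - p.2.2)).sum → (y ∈ P ↔ z ∈ P) := by
  induction L with
  | nil =>
    intro c y hy z hz h
    simp only [List.map_nil, List.sum_nil, smul_zero, sub_eq_zero] at h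
    rw [h]
  | cons p L ih =>
    obtain ⟨s, a, b⟩ := p
    intro c y hy z hz h
    obtain ⟨⟨haD, ha⟩, hbD, hb⟩ := hL (s, a, b) List.mem_cons_self
    have hL' : ∀ p ∈ L, (p.2.1 ∈ D ∧ IsConical D P p.2.1) ∧ (p.2.2 ∈ D ∧ IsConical D P p.2.2) :=
      fun p hp => hL p (List.mem_cons_of_mem _ hp)
    simp only [List.map_cons, List.sum_cons, smul_add] at h
    set u : ℝ := c * s with hu
    rcases eq_or_ne u 0 with h0 | h0
    · apply ih hL' c y hy z hz
      rw [h, smul_smul, ← hu, h0, zero_smul, zero_add]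
    · -- choose oriented apexes
      obtain ⟨t, a', b', ht, ha'D, ha', hb'D, hb', hor⟩ :
          ∃ (t : ℝ) (a' b' : Fin n → ℝ), 0 < t ∧ a' ∈ D ∧ IsConical D P a' ∧ b' ∈ D ∧
            IsConical D P b' ∧ u • (a - b) = t • (a' - b') := by
        rcases h0.lt_or_gt with hneg | hpos
        · exact ⟨-u, b, a, by linarith, hbD, hb, haD, ha, by
            rw [neg_smul, ← smul_neg, neg_sub]⟩
        · exact ⟨u, a, b, hpos, haD, ha, hbD, hb, rfl⟩
      set l : ℝ := 1 / (1 + t) with hl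
      have hl0 : 0 < l := by positivity
      have hl1 : l < 1 := by
        rw [hl, div_lt_one (by linarith)]; linarith
      have hlt : 1 - l = l * t := by
        have h1t : (1 + t) ≠ 0 := by linarith
        rw [hl]
        field_simp
        ring
      have hmem : ∀ w ∈ D, ∀ q ∈ D, q + l • (w - q) ∈ D := by
        intro w hw q hq
        have e : q + l • (w - q) = (1 - l) • q + l • w := by module
        rw [e]
        exact hD hq hw (by linarith) hl0.le (by ring)
      have hy' := hmem y hy a' ha'D
      have hz' := hmem z hz b' hb'D
      have iy : y ∈ P ↔ a' + l • (y - a') ∈ P := ha' y hy l ⟨hl0, hl1⟩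
      have iz : z ∈ P ↔ b' + l • (z - b') ∈ P := hb' z hz l ⟨hl0, hl1⟩
      rw [iy, iz]
      apply ih hL' (l * c) _ hy' _ hz'
      have hzy : z - y = t • (a' - b') + c • (L.map fun p => p.1 • (p.2.1 - p.2.2)).sum := by
        rw [h, smul_smul, ← hu, hor]
      have expand : (b' + l • (z - b')) - (a' + l • (y - a'))
          = (1 - l) • (b' - a') + l • (z - y) := by module
      rw [expand, hzy, hlt]
      module

theorem apex_set_empty_or_affine {n : ℕ} (hn : 1 ≤ n)
    (D P : Set (Fin n → ℝ)) (hD : Convex ℝ D) :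
    {v ∈ D | IsConical D P v} = ∅ ∨
      ∃ A : AffineSubspace ℝ (Fin n → ℝ), {v ∈ D | IsConical D P v} = D ∩ (A : Set (Fin n → ℝ)) := by
  set S := {v ∈ D | IsConical D P v} with hS
  rcases S.eq_empty_or_nonempty with h | ⟨v, hvD, hv⟩
  · exact Or.inl h
  right
  refine ⟨affineSpan ℝ S, ?_⟩
  have hrep : ∀ d ∈ Submodule.span ℝ (S -ᵥ S),
      ∃ L : List (ℝ × (Fin n → ℝ) × (Fin n → ℝ)),
      (∀ p ∈ L, (p.2.1 ∈ D ∧ IsConical D P p.2.1) ∧ (p.2.2 ∈ D ∧ IsConical D P p.2.2)) ∧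
      d = (L.map fun p => p.1 • (p.2.1 - p.2.2)).sum := by
    intro d hd
    induction hd using Submodule.span_induction with
    | mem d hdmem =>
      obtain ⟨a, ha, b, hb, rfl⟩ := hdmem
      exact ⟨[(1, a, b)], by rintro p hp; simp at hp; subst hp; exact ⟨⟨ha.1, ha.2⟩, hb.1, hb.2⟩,
        by simp⟩
    | zero => exact ⟨[], by simp, by simp⟩
    | add d e _ _ hdr her =>
      obtain ⟨L1, h1, e1⟩ := hdr
      obtain ⟨L2, h2, e2⟩ := her
      refine ⟨L1 ++ L2, ?_, by rw [List.map_append, List.sum_append, ← e1, ← e2]⟩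
      intro p hp
      rcases List.mem_append.1 hp with hp | hp
      exacts [h1 p hp, h2 p hp]
    | smul r d _ hdr =>
      obtain ⟨L, h1, e1⟩ := hdr
      refine ⟨L.map fun p => (r * p.1, p.2), ?_, ?_⟩
      · intro p hp
        simp only [List.mem_map] at hp
        obtain ⟨q, hq, rfl⟩ := hp
        exact h1 q hq
      · rw [e1, List.map_map, List.smul_sum, List.map_map]
        congr 1
        ext p
        simp [mul_smul]
  ext w
  constructor
  · rintro ⟨hwD, hw⟩
    exact ⟨hwD, subset_affineSpan ℝ S ⟨hwD, hw⟩⟩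
  rintro ⟨hwD, hwA⟩
  have hd : w - v ∈ Submodule.span ℝ (S -ᵥ S) := by
    have := AffineSubspace.vsub_mem_direction hwA (subset_affineSpan ℝ S ⟨hvD, hv⟩)
    rwa [direction_affineSpan, vectorSpan_def] at this
  obtain ⟨L, hLmem, hLsum⟩ := hrep _ hd
  refine ⟨hwD, ?_⟩
  intro x hx l hl
  have hy : v + l • (x - v) ∈ D := by
    have e : v + l • (x - v) = (1 - l) • v + l • x := by module
    rw [e]
    exact hD hvD hx (by linarith [hl.2]) hl.1.le (by ring)
  have hz : w + l • (x - w) ∈ D := by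
    have e : w + l • (x - w) = (1 - l) • w + l • x := by module
    rw [e]
    exact hD hwD hx (by linarith [hl.2]) hl.1.le (by ring)
  have step1 : x ∈ P ↔ v + l • (x - v) ∈ P := hv x hx l hl
  have step2 : v + l • (x - v) ∈ P ↔ w + l • (x - w) ∈ P := by
    apply conical_key hD L hLmem (1 - l) _ hy _ hz
    rw [← hLsum]
    module
  rw [step1, step2]
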